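/- Let b, c ∈ R and θ ∈ R, ε ∈ {±1}. Set a' = sin(2θ)·b + sin²θ·c, b' = ε(cos(2θ)·b + (1/2)·sin(2θ)·c), c' = cos(2θ)·c − 2sin(2θ)·b. Define the symmetric bilinear form g on R² by g(v₁,v₁)=1, g(v₁,v₂) = −c/2, g(v₂,v₂) = 4b² + (5/4)c², and the form g' by g'(w₁,w₁)=1, g'(w₁,w₂) = −c'/2, g'(w₂,w₂) = 4b'² + (5/4)c'², where w₁ = v₁ and w₂ = a'·v₁ + v₂. Then g = g' as bilinear forms, i.e., g(w_i, w_j) computed via bilinearity from g on v₁, v₂ equals g'(w_i, w_j) for all i, j. -/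

import Mathlib

/-- Frame independence of the transversal metric `g⊥`: under the change of transversal
frame `w₁ = v₁`, `w₂ = a'·v₁ + v₂` induced by a rotation of the orthonormal tangent frame,
the bilinear form with matrix `[[1, -c/2],[-c/2, 4b² + (5/4)c²]]` transforms into the one
given by the same formulas in the new coefficients `(b', c')`. -/
theorem stmt5 (b c θ ε : ℝ) (hε : ε = 1 ∨ ε = -1)
    (a' b' c' : ℝ)
    (ha' : a' = Real.sin (2 * θ) * b + (Real.sin θ) ^ 2 * c)
    (hb' : b' = ε * (Real.cos (2 * θ) * b + (1 / 2) * Real.sin (2 * θ) * c))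
    (hc' : c' = Real.cos (2 * θ) * c - 2 * Real.sin (2 * θ) * b)
    (M M' : Matrix (Fin 2) (Fin 2) ℝ)
    (hM : M = !![1, -c / 2; -c / 2, 4 * b ^ 2 + (5 / 4) * c ^ 2])
    (hM' : M' = !![1, -c' / 2; -c' / 2, 4 * b' ^ 2 + (5 / 4) * c' ^ 2])
    (w1 w2 : Fin 2 → ℝ) (hw1 : w1 = ![1, 0]) (hw2 : w2 = ![a', 1]) :
    dotProduct w1 (M.mulVec w1) = M' 0 0 ∧
    dotProduct w1 (M.mulVec w2) = M' 0 1 ∧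
    dotProduct w2 (M.mulVec w2) = M' 1 1 := by
  subst ha' hb' hc' hM hM' hw1 hw2
  have hs2 : Real.sin (2 * θ) = 2 * Real.sin θ * Real.cos θ := Real.sin_two_mul θ
  have hc2 : Real.cos (2 * θ) = Real.cos θ ^ 2 - Real.sin θ ^ 2 := Real.cos_two_mul' θ
  have hp : Real.sin θ ^ 2 + Real.cos θ ^ 2 = 1 := Real.sin_sq_add_cos_sq θ
  rw [hs2, hc2]
  set x := Real.sin θ
  set y := Real.cos θ
  rcases hε with h | h <;> subst h <;>
    exact ⟨by simp [dotProduct, Matrix.mulVec, Fin.sum_univ_two],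
      by simp only [dotProduct, Matrix.mulVec, Fin.sum_univ_two, Matrix.cons_val',
          Matrix.cons_val_zero, Matrix.cons_val_one, Matrix.head_cons, Matrix.empty_val',
          Matrix.cons_val_fin_one, Matrix.head_fin_const, Matrix.of_apply]
         linear_combination (c / 2) * hp,
      by simp only [dotProduct, Matrix.mulVec, Fin.sum_univ_two, Matrix.cons_val',
          Matrix.cons_val_zero, Matrix.cons_val_one, Matrix.head_cons, Matrix.empty_val',
          Matrix.cons_val_fin_one, Matrix.head_fin_const, Matrix.of_apply]
         linear_combination (-4 * x ^ 2 * b ^ 2 - (1 / 4) * x ^ 2 * c ^ 2 + 2 * x * y * b * c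
           - 4 * y ^ 2 * b ^ 2 - (5 / 4) * y ^ 2 * c ^ 2 - 4 * b ^ 2 - (5 / 4) * c ^ 2) * hp⟩
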